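/- arXiv:1407.8160 — 3 statements merged into one kernel-verified Lean document; each statement's English description precedes it below -/
import Mathlib

section
/- Let V : A⊗E → B⊗F be an isometry and |κ⟩ ∈ E⊗H a pure state with Schmidt decomposition |κ⟩ = Σ_i √p_i |η_i⟩|i⟩. Define the channel N_κ(ρ) = Tr_F[(V⊗I_H)(ρ ⊗ |κ⟩⟨κ|)(V⊗I_H)†] from A to B⊗H. If for every i there exists a CPTP map D_i : B → F with Ñ_{η_i} = D_i ∘ N_{η_i} (where N_η(ρ) = Tr_F V(ρ⊗|η⟩⟨η|)V† and Ñ_η(ρ) = Tr_B V(ρ⊗|η⟩⟨η|)V†), then N_κ is degradable: the map D(σ ⊗ |i⟩⟨j|) := δ_{ij} D_i(σ) is CPTP on B⊗H and satisfies Ñ_κ = D ∘ N_κ, where Ñ_κ(ρ) = Tr_{BH}[(V⊗I)(ρ⊗|κ⟩⟨κ|)(V⊗I)†] = Σ_i p_i Ñ_{η_i}(ρ). -/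
open Matrix
open scoped ComplexOrder

/-- The Choi matrix of a linear map between matrix algebras. -/
noncomputable def choiMatrix {n m : Type*} [Fintype n] [DecidableEq n]
    (Φ : Matrix n n ℂ →ₗ[ℂ] Matrix m m ℂ) : Matrix (n × m) (n × m) ℂ :=
  Matrix.of fun p q => Φ (Matrix.single p.1 q.1 1) p.2 q.2

/-- A linear map between matrix algebras is CPTP iff its Choi matrix is positive
semidefinite and it preserves the trace. -/
def IsCPTP {n m : Type*} [Fintype n] [DecidableEq n] [Fintype m]
    (Φ : Matrix n n ℂ →ₗ[ℂ] Matrix m m ℂ) : Prop :=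
  (choiMatrix Φ).PosSemidef ∧ ∀ x, (Φ x).trace = x.trace

section
variable {A E B F H : Type*} [Fintype A] [Fintype E] [Fintype B] [Fintype F] [Fintype H]

/-- The channel `N_η(ρ) = Tr_F[V (ρ ⊗ |η⟩⟨η|) V†]` from `A` to `B`. -/
noncomputable def Nchan (V : Matrix (B × F) (A × E) ℂ) (η : E → ℂ)
    (ρ : Matrix A A ℂ) : Matrix B B ℂ :=
  Matrix.of fun b b' => ∑ f, ∑ a, ∑ e, ∑ a', ∑ e',
    V (b, f) (a, e) * ρ a a' * η e * (starRingEnd ℂ) (η e')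
      * (starRingEnd ℂ) (V (b', f) (a', e'))

/-- The complementary channel `Ñ_η(ρ) = Tr_B[V (ρ ⊗ |η⟩⟨η|) V†]` from `A` to `F`. -/
noncomputable def Ncomp (V : Matrix (B × F) (A × E) ℂ) (η : E → ℂ)
    (ρ : Matrix A A ℂ) : Matrix F F ℂ :=
  Matrix.of fun f f' => ∑ b, ∑ a, ∑ e, ∑ a', ∑ e',
    V (b, f) (a, e) * ρ a a' * η e * (starRingEnd ℂ) (η e')
      * (starRingEnd ℂ) (V (b, f') (a', e'))

/-- The channel `N_κ(ρ) = Tr_F[(V ⊗ I_H)(ρ ⊗ |κ⟩⟨κ|)(V ⊗ I_H)†]` from `A` to `B ⊗ H`. -/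
noncomputable def Nkappa (V : Matrix (B × F) (A × E) ℂ) (κ : E × H → ℂ)
    (ρ : Matrix A A ℂ) : Matrix (B × H) (B × H) ℂ :=
  Matrix.of fun p q => ∑ f, ∑ a, ∑ e, ∑ a', ∑ e',
    V (p.1, f) (a, e) * ρ a a' * κ (e, p.2) * (starRingEnd ℂ) (κ (e', q.2))
      * (starRingEnd ℂ) (V (q.1, f) (a', e'))

/-- The complementary channel `Ñ_κ(ρ) = Tr_{BH}[(V ⊗ I_H)(ρ ⊗ |κ⟩⟨κ|)(V ⊗ I_H)†]`. -/
noncomputable def Nkappacomp (V : Matrix (B × F) (A × E) ℂ) (κ : E × H → ℂ)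
    (ρ : Matrix A A ℂ) : Matrix F F ℂ :=
  Matrix.of fun f f' => ∑ b, ∑ h, ∑ a, ∑ e, ∑ a', ∑ e',
    V (b, f) (a, e) * ρ a a' * κ (e, h) * (starRingEnd ℂ) (κ (e', h))
      * (starRingEnd ℂ) (V (b, f') (a', e'))


set_option linter.unusedSectionVars false

lemma psd_blockDiagonal {m o : Type*} [Fintype m] [Fintype o] [DecidableEq m] [DecidableEq o]
    {M : o → Matrix m m ℂ} (h : ∀ k, (M k).PosSemidef) :
    (Matrix.blockDiagonal M).PosSemidef := by
  rw [Matrix.posSemidef_iff_dotProduct_mulVec]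
  constructor
  · rw [Matrix.IsHermitian, Matrix.blockDiagonal_conjTranspose]
    exact congrArg _ (funext fun k => (h k).1)
  · intro x
    have key : star x ⬝ᵥ Matrix.blockDiagonal M *ᵥ x =
        ∑ k, star (fun i => x (i, k)) ⬝ᵥ M k *ᵥ (fun i => x (i, k)) := by
      simp only [dotProduct, Matrix.mulVec, dotProduct, Pi.star_apply,
        Matrix.blockDiagonal_apply, ite_mul, zero_mul, mul_ite, mul_zero,
        Fintype.sum_prod_type]
      rw [Finset.sum_comm]
      refine Finset.sum_congr rfl fun k _ => Finset.sum_congr rfl fun i _ =>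
        congrArg _ (Finset.sum_congr rfl fun j _ => ?_)
      simp
    rw [key]
    exact Finset.sum_nonneg fun k _ => (Matrix.posSemidef_iff_dotProduct_mulVec.mp (h k)).2 _

/-- Extract the `i`-th diagonal block of a matrix on `B × H`, as a linear map. -/
noncomputable def blockL (i : H) : Matrix (B × H) (B × H) ℂ →ₗ[ℂ] Matrix B B ℂ where
  toFun σ := Matrix.of fun b b' => σ (b, i) (b', i)
  map_add' σ τ := by ext b b'; simp [Matrix.add_apply]
  map_smul' c σ := by ext b b'; simp [Matrix.smul_apply]

lemma blockL_apply (i : H) (σ : Matrix (B × H) (B × H) ℂ) (b b' : B) :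
    blockL i σ b b' = σ (b, i) (b', i) := rfl

lemma blockL_stdBasis [DecidableEq B] [DecidableEq H] (i : H) (b b' : B) (h h' : H) :
    blockL i (Matrix.single (b, h) (b', h') (1 : ℂ)) =
      if h = i ∧ h' = i then Matrix.single b b' 1 else 0 := by
  ext c c'
  simp only [blockL_apply, Matrix.single, Matrix.of_apply, Prod.mk.injEq]
  by_cases h1 : h = i <;> by_cases h2 : h' = i <;>
    simp [h1, h2, Matrix.zero_apply, and_assoc, and_comm, and_left_comm]

/-- If `V : A⊗E → B⊗F` is an isometry such that every `N_{η_i}` is degradable via `D_i`,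
and `|κ⟩ = ∑_i √p_i |η_i⟩|i⟩` is a Schmidt decomposition, then `N_κ` is degradable
via the block map `D(σ ⊗ |i⟩⟨j|) = δ_{ij} D_i(σ)`. -/
theorem stmt13 [DecidableEq A] [DecidableEq B] [DecidableEq E] [DecidableEq H]
    (V : Matrix (B × F) (A × E) ℂ) (hV : Vᴴ * V = 1)
    (p : H → ℝ) (hp : ∀ i, 0 ≤ p i) (hpsum : ∑ i, p i = 1)
    (η : H → E → ℂ)
    (hη : ∀ i j, ∑ e, (starRingEnd ℂ) (η i e) * η j e = if i = j then 1 else 0)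
    (κ : E × H → ℂ) (hκ : ∀ e i, κ (e, i) = (Real.sqrt (p i) : ℂ) * η i e)
    (D : H → (Matrix B B ℂ →ₗ[ℂ] Matrix F F ℂ))
    (hD : ∀ i, IsCPTP (D i))
    (hdeg : ∀ i ρ, Ncomp V (η i) ρ = D i (Nchan V (η i) ρ)) :
    ∃ Dk : Matrix (B × H) (B × H) ℂ →ₗ[ℂ] Matrix F F ℂ,
      IsCPTP Dk ∧
      (∀ σ : Matrix (B × H) (B × H) ℂ,
        Dk σ = ∑ i, D i (Matrix.of fun b b' => σ (b, i) (b', i))) ∧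
      ∀ ρ : Matrix A A ℂ, Nkappacomp V κ ρ = Dk (Nkappa V κ ρ) := by
  classical
  refine ⟨∑ i, (D i).comp (blockL i), ⟨?_, ?_⟩, ?_, ?_⟩
  · -- Choi matrix is PSD
    have hchoi : choiMatrix (∑ i, (D i).comp (blockL i)) =
        (Matrix.blockDiagonal fun h => choiMatrix (D h)).submatrix
          (fun q : (B × H) × F => ((q.1.1, q.2), q.1.2))
          (fun q : (B × H) × F => ((q.1.1, q.2), q.1.2)) := by
      ext ⟨⟨b, h⟩, f⟩ ⟨⟨b', h'⟩, f'⟩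
      simp only [choiMatrix, Matrix.of_apply, LinearMap.sum_apply, LinearMap.comp_apply,
        Matrix.sum_apply, Matrix.submatrix_apply, Matrix.blockDiagonal_apply]
      by_cases hhh : h = h'
      · subst hhh
        rw [Finset.sum_eq_single h]
        · simp [blockL_stdBasis]
        · intro j _ hj
          simp [blockL_stdBasis, Ne.symm hj]
        · simp
      · rw [if_neg hhh]
        refine Finset.sum_eq_zero fun j _ => ?_
        rcases eq_or_ne h j with rfl | hj
        · simp [blockL_stdBasis, Ne.symm hhh]
        · simp [blockL_stdBasis, hj]
    rw [hchoi]
    exact (psd_blockDiagonal fun h => (hD h).1).submatrix _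
  · -- trace preserving
    intro σ
    have h1 : ∀ i, ((D i) (blockL i σ)).trace = (blockL i σ).trace := fun i => (hD i).2 _
    rw [LinearMap.sum_apply]
    simp only [LinearMap.comp_apply]
    rw [Matrix.trace_sum]
    simp only [h1]
    simp only [Matrix.trace, Matrix.diag, blockL_apply]
    rw [Finset.sum_comm]
    exact (Fintype.sum_prod_type (fun x : B × H => σ x x)).symm
  · intro σ
    simp [LinearMap.sum_apply, LinearMap.comp_apply, blockL]
  · -- degradation identity
    intro ρ
    have hblock : ∀ i, blockL i (Nkappa V κ ρ) = (p i : ℂ) • Nchan V (η i) ρ := by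
      intro i
      ext b b'
      simp only [blockL_apply, Nkappa, Nchan, Matrix.of_apply, Matrix.smul_apply,
        smul_eq_mul, Finset.mul_sum]
      refine Finset.sum_congr rfl fun f _ => Finset.sum_congr rfl fun a _ =>
        Finset.sum_congr rfl fun e _ => Finset.sum_congr rfl fun a' _ =>
        Finset.sum_congr rfl fun e' _ => ?_
      simp only [hκ, _root_.map_mul, Complex.conj_ofReal]
      have hs : ((Real.sqrt (p i) : ℂ)) * (Real.sqrt (p i) : ℂ) = (p i : ℂ) := by
        rw [← Complex.ofReal_mul, Real.mul_self_sqrt (hp i)]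
      calc V (b, f) (a, e) * ρ a a' * ((Real.sqrt (p i) : ℂ) * η i e) *
            ((Real.sqrt (p i) : ℂ) * (starRingEnd ℂ) (η i e')) *
            (starRingEnd ℂ) (V (b', f) (a', e'))
          = ((Real.sqrt (p i) : ℂ) * (Real.sqrt (p i) : ℂ)) *
            (V (b, f) (a, e) * ρ a a' * η i e * (starRingEnd ℂ) (η i e') *
              (starRingEnd ℂ) (V (b', f) (a', e'))) := by ring
        _ = _ := by rw [hs]
    ext f f'
    simp only [LinearMap.sum_apply, LinearMap.comp_apply, Matrix.sum_apply, hblock,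
      _root_.map_smul, ← hdeg, Matrix.smul_apply, smul_eq_mul]
    simp only [Nkappacomp, Ncomp, Matrix.of_apply, Finset.mul_sum]
    rw [Finset.sum_comm]
    refine Finset.sum_congr rfl fun h _ => Finset.sum_congr rfl fun b _ =>
      Finset.sum_congr rfl fun a _ => Finset.sum_congr rfl fun e _ =>
      Finset.sum_congr rfl fun a' _ => Finset.sum_congr rfl fun e' _ => ?_
    simp only [hκ, _root_.map_mul, Complex.conj_ofReal]
    have hs : ((Real.sqrt (p h) : ℂ)) * (Real.sqrt (p h) : ℂ) = (p h : ℂ) := by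
      rw [← Complex.ofReal_mul, Real.mul_self_sqrt (hp h)]
    calc V (b, f) (a, e) * ρ a a' * ((Real.sqrt (p h) : ℂ) * η h e) *
          ((Real.sqrt (p h) : ℂ) * (starRingEnd ℂ) (η h e')) *
          (starRingEnd ℂ) (V (b, f') (a', e'))
        = ((Real.sqrt (p h) : ℂ) * (Real.sqrt (p h) : ℂ)) *
          (V (b, f) (a, e) * ρ a a' * η h e * (starRingEnd ℂ) (η h e') *
            (starRingEnd ℂ) (V (b, f') (a', e'))) := by ring
      _ = _ := by rw [hs]

end
end

section
/- Let V = |0⟩⟨0| ⊗ U_0 + |1⟩⟨1| ⊗ U_1 be a controlled unitary on C²⊗C², with U_0, U_1 ∈ SU(2). Let T denote transposition with respect to the magic basis. Then V^T V is unitarily similar to |1⟩⟨1| ⊗ U_0†U_1 + |0⟩⟨0| ⊗ U_1†U_0, and its spectrum is (e^{id}, e^{id}, e^{−id}, e^{−id}) where 2cos d = Tr(U_0†U_1). -/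
open Matrix Polynomial

private def sumEquivProd : (Fin 2) ⊕ (Fin 2) ≃ (Fin 2 × Fin 2) where
  toFun := Sum.elim (fun i => ((0 : Fin 2), i)) (fun i => ((1 : Fin 2), i))
  invFun := fun p => if p.1 = 0 then Sum.inl p.2 else Sum.inr p.2
  left_inv := by rintro (i | i) <;> simp
  right_inv := by rintro ⟨a, i⟩; fin_cases a <;> simp

private lemma charpoly_fin2 (A : Matrix (Fin 2) (Fin 2) ℂ) :
    A.charpoly = X ^ 2 - C A.trace * X + C A.det := by
  rw [Matrix.charpoly, Matrix.det_fin_two]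
  simp [Matrix.charmatrix_apply, Matrix.diagonal, Matrix.trace_fin_two, Matrix.det_fin_two]
  ring


private lemma aux_QM
    (M : Matrix (Fin 2 × Fin 2) (Fin 4) ℂ)
    (hM : M = Matrix.of fun x k =>
      if k = 0 then (if x = (0, 0) then 1 else if x = (1, 1) then 1 else 0) / (Real.sqrt 2 : ℂ)
      else if k = 1 then
        (-Complex.I) * (if x = (0, 0) then 1 else if x = (1, 1) then -1 else 0) / (Real.sqrt 2 : ℂ)
      else if k = 2 then
        (if x = (0, 1) then 1 else if x = (1, 0) then -1 else 0) / (Real.sqrt 2 : ℂ)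
      else
        (-Complex.I) * (if x = (0, 1) then 1 else if x = (1, 0) then 1 else 0) / (Real.sqrt 2 : ℂ)) :
    M * Mᵀ = Matrix.of fun p q =>
      if p.1 = q.1 then 0 else if p.2 = q.2 then 0 else if p.1 = p.2 then 1 else -1 := by
  have hs2 : ((Real.sqrt 2 : ℝ) : ℂ) * ((Real.sqrt 2 : ℝ) : ℂ) = 2 := by
    norm_cast; exact Real.mul_self_sqrt (by norm_num)
  have hs2' : ((Real.sqrt 2 : ℝ) : ℂ) ^ 2 = 2 := by rw [sq]; exact hs2
  rw [hM]
  ext ⟨a, i⟩ ⟨b, j⟩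
  fin_cases a <;> fin_cases b <;> fin_cases i <;> fin_cases j <;>
    simp [Matrix.mul_apply, Fin.sum_univ_four, Prod.mk.injEq, Prod.ext_iff, div_mul_div_comm,
      hs2, hs2', Complex.I_mul_I] <;>
    ring_nf <;> simp [Complex.I_sq, hs2'] <;> norm_num

private lemma aux_D
    (U₀ U₁ : Matrix (Fin 2) (Fin 2) ℂ)
    (hstar₀ : U₀ᴴ = !![U₀ 1 1, -U₀ 0 1; -U₀ 1 0, U₀ 0 0])
    (hstar₁ : U₁ᴴ = !![U₁ 1 1, -U₁ 0 1; -U₁ 1 0, U₁ 0 0])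
    (V : Matrix (Fin 2 × Fin 2) (Fin 2 × Fin 2) ℂ)
    (hV : V = Matrix.of fun p q => if p.1 = q.1 then
        (if p.1 = 0 then U₀ p.2 q.2 else U₁ p.2 q.2) else 0)
    (Q : Matrix (Fin 2 × Fin 2) (Fin 2 × Fin 2) ℂ)
    (hQ : Q = Matrix.of fun p q =>
      if p.1 = q.1 then 0 else if p.2 = q.2 then 0 else if p.1 = p.2 then 1 else -1) :
    Q * Vᵀ * Q * V = (Matrix.of fun p q => if p.1 = q.1 then
        (if p.1 = 1 then (U₀ᴴ * U₁) p.2 q.2 else (U₁ᴴ * U₀) p.2 q.2) else 0) := by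
  rw [hQ, hV]
  simp only [hstar₀, hstar₁]
  ext ⟨a, i⟩ ⟨b, j⟩
  fin_cases a <;> fin_cases b <;> fin_cases i <;> fin_cases j <;>
    simp [Matrix.mul_apply, Matrix.transpose_apply, Fintype.sum_prod_type, Fin.sum_univ_two,
      Prod.mk.injEq, Prod.ext_iff]

/-- For a controlled unitary `V = |0⟩⟨0|⊗U₀ + |1⟩⟨1|⊗U₁` with `U₀, U₁ ∈ SU(2)`, the
magic-basis transpose satisfies: `Vᵀ V` is unitarily similar to
`|1⟩⟨1|⊗U₀†U₁ + |0⟩⟨0|⊗U₁†U₀`, and its spectrum is `(e^{id}, e^{id}, e^{−id}, e^{−id})`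
where `2 cos d = Tr(U₀†U₁)`. -/
theorem stmt16
    (U₀ U₁ : Matrix (Fin 2) (Fin 2) ℂ)
    (hU₀ : U₀ ∈ Matrix.unitaryGroup (Fin 2) ℂ) (hdet₀ : U₀.det = 1)
    (hU₁ : U₁ ∈ Matrix.unitaryGroup (Fin 2) ℂ) (hdet₁ : U₁.det = 1)
    (V : Matrix (Fin 2 × Fin 2) (Fin 2 × Fin 2) ℂ)
    (hV : V = Matrix.of fun p q => if p.1 = q.1 then
        (if p.1 = 0 then U₀ p.2 q.2 else U₁ p.2 q.2) else 0)
    (M : Matrix (Fin 2 × Fin 2) (Fin 4) ℂ)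
    (hM : M = Matrix.of fun x k =>
      if k = 0 then (if x = (0, 0) then 1 else if x = (1, 1) then 1 else 0) / (Real.sqrt 2 : ℂ)
      else if k = 1 then
        (-Complex.I) * (if x = (0, 0) then 1 else if x = (1, 1) then -1 else 0) / (Real.sqrt 2 : ℂ)
      else if k = 2 then
        (if x = (0, 1) then 1 else if x = (1, 0) then -1 else 0) / (Real.sqrt 2 : ℂ)
      else
        (-Complex.I) * (if x = (0, 1) then 1 else if x = (1, 0) then 1 else 0) / (Real.sqrt 2 : ℂ))
    (VT : Matrix (Fin 2 × Fin 2) (Fin 2 × Fin 2) ℂ)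
    (hVT : VT = M * (Mᴴ * V * M)ᵀ * Mᴴ)
    (d : ℝ) (hd : ((2 * Real.cos d : ℝ) : ℂ) = (U₀ᴴ * U₁).trace) :
    (∃ W ∈ Matrix.unitaryGroup (Fin 2 × Fin 2) ℂ,
      VT * V = W * (Matrix.of fun p q => if p.1 = q.1 then
        (if p.1 = 1 then (U₀ᴴ * U₁) p.2 q.2 else (U₁ᴴ * U₀) p.2 q.2) else 0) * Wᴴ)
    ∧ (VT * V).charpoly
        = (X - C (Complex.exp (Complex.I * d))) ^ 2
          * (X - C (Complex.exp (-(Complex.I * d)))) ^ 2 := by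
  -- SU(2) conjugate-transpose via adjugate
  have hstar₀ : U₀ᴴ = !![U₀ 1 1, -U₀ 0 1; -U₀ 1 0, U₀ 0 0] := by
    have h := Matrix.inv_eq_right_inv (Matrix.mem_unitaryGroup_iff.mp hU₀)
    rw [Matrix.star_eq_conjTranspose] at h
    rw [← h, Matrix.inv_def, hdet₀, Matrix.adjugate_fin_two]; simp
  have hstar₁ : U₁ᴴ = !![U₁ 1 1, -U₁ 0 1; -U₁ 1 0, U₁ 0 0] := by
    have h := Matrix.inv_eq_right_inv (Matrix.mem_unitaryGroup_iff.mp hU₁)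
    rw [Matrix.star_eq_conjTranspose] at h
    rw [← h, Matrix.inv_def, hdet₁, Matrix.adjugate_fin_two]; simp
  -- the matrix Q = M Mᵀ
  set Q : Matrix (Fin 2 × Fin 2) (Fin 2 × Fin 2) ℂ := Matrix.of fun p q =>
      if p.1 = q.1 then 0 else if p.2 = q.2 then 0 else if p.1 = p.2 then 1 else -1 with hQ
  have hQM : M * Mᵀ = Q := aux_QM M hM
  have hQH : Qᴴ = Q := by
    rw [hQ]
    ext ⟨a, i⟩ ⟨b, j⟩
    fin_cases a <;> fin_cases b <;> fin_cases i <;> fin_cases j <;>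
      simp [Matrix.conjTranspose_apply, Prod.mk.injEq, Prod.ext_iff]
  -- rewrite VT as Q Vᵀ Q
  have hct : (Mᴴ)ᵀ = (Mᵀ)ᴴ := rfl
  have hVTQ : VT = Q * Vᵀ * Q := by
    rw [hVT, Matrix.transpose_mul, Matrix.transpose_mul, hct]
    calc M * (Mᵀ * (Vᵀ * (Mᵀ)ᴴ)) * Mᴴ
        = (M * Mᵀ) * Vᵀ * ((Mᵀ)ᴴ * Mᴴ) := by
          simp only [Matrix.mul_assoc]
      _ = (M * Mᵀ) * Vᵀ * (M * Mᵀ)ᴴ := by rw [Matrix.conjTranspose_mul]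
      _ = Q * Vᵀ * Q := by rw [hQM, hQH]
  -- the key matrix identity
  have hD : VT * V = (Matrix.of fun p q => if p.1 = q.1 then
      (if p.1 = 1 then (U₀ᴴ * U₁) p.2 q.2 else (U₁ᴴ * U₀) p.2 q.2) else 0) := by
    rw [hVTQ]
    exact aux_D U₀ U₁ hstar₀ hstar₁ V hV Q hQ
  constructor
  · exact ⟨1, Submonoid.one_mem _, by
      rw [hD]; simp⟩
  · -- characteristic polynomial
    rw [hD]
    have hre : (Matrix.of fun p q => if p.1 = q.1 then
        (if p.1 = 1 then (U₀ᴴ * U₁) p.2 q.2 else (U₁ᴴ * U₀) p.2 q.2) else 0 :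
          Matrix (Fin 2 × Fin 2) (Fin 2 × Fin 2) ℂ)
        = Matrix.reindex sumEquivProd sumEquivProd
          (Matrix.fromBlocks (U₁ᴴ * U₀) 0 0 (U₀ᴴ * U₁)) := by
      ext ⟨a, i⟩ ⟨b, j⟩
      fin_cases a <;> fin_cases b <;>
        simp [sumEquivProd, Matrix.fromBlocks, Matrix.reindex_apply, Matrix.submatrix_apply,
          Equiv.coe_fn_symm_mk]
    rw [hre, Matrix.charpoly_reindex, Matrix.charpoly_fromBlocks_zero₁₂,
      charpoly_fin2, charpoly_fin2]
    -- traces and determinants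
    have htrB : (U₀ᴴ * U₁).trace = ((2 * Real.cos d : ℝ) : ℂ) := hd.symm
    have htrA : (U₁ᴴ * U₀).trace = ((2 * Real.cos d : ℝ) : ℂ) := by
      have h : (U₁ᴴ * U₀) = (U₀ᴴ * U₁)ᴴ := by
        rw [Matrix.conjTranspose_mul, Matrix.conjTranspose_conjTranspose]
      rw [h, Matrix.trace_conjTranspose, htrB]
      simp only [Complex.star_def]
      exact Complex.conj_ofReal _
    have hdetA : (U₁ᴴ * U₀).det = 1 := by
      rw [Matrix.det_mul, Matrix.det_conjTranspose, hdet₁, hdet₀]; simp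
    have hdetB : (U₀ᴴ * U₁).det = 1 := by
      rw [Matrix.det_mul, Matrix.det_conjTranspose, hdet₀, hdet₁]; simp
    rw [htrA, htrB, hdetA, hdetB]
    -- scalar identities for the eigenvalues
    set a : ℂ := Complex.exp (Complex.I * d) with ha
    set b : ℂ := Complex.exp (-(Complex.I * d)) with hb
    have hab : a * b = 1 := by
      rw [ha, hb, ← Complex.exp_add]
      simp
    have hsum : a + b = ((2 * Real.cos d : ℝ) : ℂ) := by
      rw [ha, hb]
      push_cast
      rw [Complex.two_cos, mul_comm Complex.I (d : ℂ), neg_mul]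
    have key : (X - C a) * (X - C b)
        = X ^ 2 - C ((2 * Real.cos d : ℝ) : ℂ) * X + C 1 := by
      have h1 : C a * C b = C 1 := by rw [← C_mul, hab]
      have h2 : C a + C b = C ((2 * Real.cos d : ℝ) : ℂ) := by rw [← C_add, hsum]
      calc (X - C a) * (X - C b) = X ^ 2 - (C a + C b) * X + C a * C b := by ring
        _ = _ := by rw [h1, h2]
    calc (X ^ 2 - C ((2 * Real.cos d : ℝ) : ℂ) * X + C 1)
          * (X ^ 2 - C ((2 * Real.cos d : ℝ) : ℂ) * X + C 1)
        = ((X - C a) * (X - C b)) ^ 2 := by rw [key]; ring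
      _ = (X - C a) ^ 2 * (X - C b) ^ 2 := by ring
end

section
/- Consider the generalized amplitude damping channel N on a qubit with Kraus operators K_0 = diag(1, c), K_1 = s·|0⟩⟨1| where c = (1+e^{iπγ})/2 and s = (1−e^{iπγ})/2, γ ∈ [0,1]. Its Choi matrix ρ_{RB} = (id⊗N)(|Φ⟩⟨Φ|) with |Φ⟩ = (|00⟩+|11⟩)/√2 satisfies: λ_max(ρ_{RB}) ≤ λ_max(ρ_B) if and only if γ ∈ [1/2, 1], where ρ_B = Tr_R ρ_{RB}. -/
set_option maxHeartbeats 1000000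

open Matrix Kronecker

/-- A real number is an eigenvalue of a Hermitian complex matrix iff it kills the
characteristic determinant. -/
lemma stmt18_eig_iff_det {n : Type*} [Fintype n] [DecidableEq n] {M : Matrix n n ℂ}
    (hM : M.IsHermitian) (x : ℝ) :
    (∃ i, hM.eigenvalues i = x) ↔ ((x : ℂ) • (1 : Matrix n n ℂ) - M).det = 0 := by
  have h1 : (∃ i, hM.eigenvalues i = x) ↔ x ∈ spectrum ℝ M := by
    rw [hM.spectrum_real_eq_range_eigenvalues]
    exact Iff.rfl
  rw [h1, ← spectrum.algebraMap_mem_iff ℂ, spectrum.mem_iff,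
    Matrix.isUnit_iff_isUnit_det, isUnit_iff_ne_zero, not_not,
    Algebra.algebraMap_eq_smul_one]
  norm_num

/-- Myhr–Lütkenhaus criterion for `SWAP^γ` with environment `|0⟩`: the Choi matrix
`ρ_{RB} = (id⊗N)(Φ)` of the induced generalized amplitude damping channel satisfies
`λ_max(ρ_{RB}) ≤ λ_max(ρ_B)` iff `γ ∈ [1/2, 1]`. -/
theorem stmt18 (γ : ℝ) (hγ : γ ∈ Set.Icc (0 : ℝ) 1)
    (c s : ℂ) (hc : c = (1 + Complex.exp (Complex.I * Real.pi * γ)) / 2)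
    (hs : s = (1 - Complex.exp (Complex.I * Real.pi * γ)) / 2)
    (K₀ K₁ : Matrix (Fin 2) (Fin 2) ℂ)
    (hK₀ : K₀ = !![1, 0; 0, c]) (hK₁ : K₁ = !![0, s; 0, 0])
    (Φ : Matrix (Fin 2 × Fin 2) (Fin 2 × Fin 2) ℂ)
    (hΦ : Φ = Matrix.of fun p q =>
      ((if p.1 = p.2 then 1 else 0) * (if q.1 = q.2 then 1 else 0) : ℂ) / 2)
    (ρRB : Matrix (Fin 2 × Fin 2) (Fin 2 × Fin 2) ℂ)
    (hρRB : ρRB = ((1 : Matrix (Fin 2) (Fin 2) ℂ) ⊗ₖ K₀) * Φ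
          * ((1 : Matrix (Fin 2) (Fin 2) ℂ) ⊗ₖ K₀)ᴴ
        + ((1 : Matrix (Fin 2) (Fin 2) ℂ) ⊗ₖ K₁) * Φ
          * ((1 : Matrix (Fin 2) (Fin 2) ℂ) ⊗ₖ K₁)ᴴ)
    (ρB : Matrix (Fin 2) (Fin 2) ℂ)
    (hρB : ρB = Matrix.of fun b b' => ∑ r, ρRB (r, b) (r, b'))
    (hRB : ρRB.IsHermitian) (hB : ρB.IsHermitian) :
    Finset.univ.sup' Finset.univ_nonempty hRB.eigenvalues
        ≤ Finset.univ.sup' Finset.univ_nonempty hB.eigenvalues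
      ↔ γ ∈ Set.Icc (1 / 2 : ℝ) 1 := by
  set t : ℝ := Real.cos (Real.pi * γ) with htdef
  set u : ℝ := Real.sin (Real.pi * γ) with hudef
  have ht1 : -1 ≤ t := Real.neg_one_le_cos _
  have ht2 : t ≤ 1 := Real.cos_le_one _
  -- exponential in terms of sine and cosine
  have hexp : Complex.exp (Complex.I * Real.pi * γ) = (t : ℂ) + (u : ℂ) * Complex.I := by
    rw [show Complex.I * (Real.pi : ℂ) * (γ : ℂ) = ((Real.pi * γ : ℝ) : ℂ) * Complex.I by
      push_cast; ring, Complex.exp_mul_I, htdef, hudef]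
    rw [← Complex.ofReal_cos, ← Complex.ofReal_sin]
  have hpyth : (u : ℂ) ^ 2 + (t : ℂ) ^ 2 = 1 := by
    exact_mod_cast congrArg (Complex.ofReal) (Real.sin_sq_add_cos_sq (Real.pi * γ))
  have hcc : c * starRingEnd ℂ c = (((1 + t) / 2 : ℝ) : ℂ) := by
    rw [hc, hexp]
    simp only [map_div₀, _root_.map_add, _root_.map_one, _root_.map_mul, Complex.conj_ofReal,
      Complex.conj_I, map_ofNat]
    push_cast
    linear_combination (1 / 4 : ℂ) * hpyth - ((u : ℂ) ^ 2 / 4) * Complex.I_sq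
  have hcc' : starRingEnd ℂ c * c = (((1 + t) / 2 : ℝ) : ℂ) := by
    rw [mul_comm]; exact hcc
  have hss : s * starRingEnd ℂ s = (((1 - t) / 2 : ℝ) : ℂ) := by
    rw [hs, hexp]
    simp only [map_div₀, _root_.map_sub, _root_.map_add, _root_.map_one, _root_.map_mul, Complex.conj_ofReal,
      Complex.conj_I, map_ofNat]
    push_cast
    linear_combination (1 / 4 : ℂ) * hpyth - ((u : ℂ) ^ 2 / 4) * Complex.I_sq
  have hss' : starRingEnd ℂ s * s = (((1 - t) / 2 : ℝ) : ℂ) := by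
    rw [mul_comm]; exact hss
  -- explicit form of ρRB
  have hval : ρRB = (!![1/2, 0, 0, starRingEnd ℂ c/2;
          0, 0, 0, 0;
          0, 0, s * starRingEnd ℂ s/2, 0;
          c/2, 0, 0, c * starRingEnd ℂ c/2] : Matrix (Fin 4) (Fin 4) ℂ).submatrix
            finProdFinEquiv finProdFinEquiv := by
    rw [hK₀] at hρRB
    rw [hK₁] at hρRB
    rw [hΦ] at hρRB
    rw [hρRB]
    ext ⟨i, j⟩ ⟨k, l⟩
    fin_cases i <;> fin_cases j <;> fin_cases k <;> fin_cases l <;>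
      simp [Matrix.mul_apply, Fintype.sum_prod_type, Fin.sum_univ_two,
        Matrix.one_apply, finProdFinEquiv, Matrix.vecHead, Matrix.vecTail] <;> ring
  -- characteristic determinant of ρRB
  have hdetRB : ∀ z : ℂ, (z • (1 : Matrix (Fin 2 × Fin 2) (Fin 2 × Fin 2) ℂ) - ρRB).det
      = z ^ 2 * (z - (((1 - t) / 4 : ℝ) : ℂ)) * (z - (((3 + t) / 4 : ℝ) : ℂ)) := by
    intro z
    have h1 : z • (1 : Matrix (Fin 2 × Fin 2) (Fin 2 × Fin 2) ℂ) - ρRB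
        = ((z • (1 : Matrix (Fin 4) (Fin 4) ℂ) - !![1/2, 0, 0, starRingEnd ℂ c/2;
            0, 0, 0, 0;
            0, 0, s * starRingEnd ℂ s/2, 0;
            c/2, 0, 0, c * starRingEnd ℂ c/2]).submatrix finProdFinEquiv finProdFinEquiv) := by
      ext p q
      simp [hval, Matrix.one_apply, EmbeddingLike.apply_eq_iff_eq]
    have h2 : z • (1 : Matrix (Fin 4) (Fin 4) ℂ) - !![1/2, 0, 0, starRingEnd ℂ c/2;
            0, 0, 0, 0;
            0, 0, s * starRingEnd ℂ s/2, 0;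
            c/2, 0, 0, c * starRingEnd ℂ c/2]
        = !![z - 1/2, 0, 0, -(starRingEnd ℂ c/2);
            0, z, 0, 0;
            0, 0, z - (((1 - t) / 2 : ℝ) : ℂ)/2, 0;
            -(c/2), 0, 0, z - (((1 + t) / 2 : ℝ) : ℂ)/2] := by
      ext i j
      fin_cases i <;> fin_cases j <;>
        simp [Matrix.one_apply, Matrix.vecHead, Matrix.vecTail, hss, hcc]
    rw [h1, Matrix.det_submatrix_equiv_self, h2]
    rw [Matrix.det_succ_row_zero]
    simp (config := { decide := true }) [Fin.sum_univ_succ, Matrix.det_fin_three,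
      Matrix.submatrix_apply, Fin.succAbove, Fin.castSucc, Fin.castAdd, Fin.castLE]
    push_cast at hcc' ⊢
    linear_combination (-(z * (z - (1 - (t : ℂ)) / 4)) / 4) * hcc'
  -- explicit form of ρB and its characteristic determinant
  have hvalB : ρB = !![1/2 + s * starRingEnd ℂ s / 2, 0; 0, c * starRingEnd ℂ c / 2] := by
    rw [hρB]
    ext b b'
    fin_cases b <;> fin_cases b' <;>
      simp [hval, Fintype.sum_prod_type, Fin.sum_univ_two, finProdFinEquiv,
        Matrix.vecHead, Matrix.vecTail] <;> ring
  have hdetB : ∀ z : ℂ, (z • (1 : Matrix (Fin 2) (Fin 2) ℂ) - ρB).det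
      = (z - (((3 - t) / 4 : ℝ) : ℂ)) * (z - (((1 + t) / 4 : ℝ) : ℂ)) := by
    intro z
    rw [hvalB, Matrix.det_fin_two]
    simp [Matrix.one_apply, hss, hcc]
    push_cast
    ring
  -- eigenvalue characterizations
  have hofReal : ∀ x y : ℝ, ((x : ℂ) = (y : ℂ)) ↔ x = y := fun x y => Complex.ofReal_inj
  have hspecRB : ∀ x : ℝ, (∃ i, hRB.eigenvalues i = x) ↔
      (x = 0 ∨ x = (1 - t) / 4 ∨ x = (3 + t) / 4) := by
    intro x
    rw [stmt18_eig_iff_det hRB x, hdetRB]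
    rw [mul_eq_zero, mul_eq_zero, pow_eq_zero_iff (by norm_num), sub_eq_zero, sub_eq_zero]
    push_cast
    constructor
    · rintro ((h | h) | h)
      · exact Or.inl (by exact_mod_cast h)
      · exact Or.inr (Or.inl (by apply Complex.ofReal_injective; rw [h]; push_cast; ring))
      · exact Or.inr (Or.inr (by apply Complex.ofReal_injective; rw [h]; push_cast; ring))
    · rintro (h | h | h)
      · exact Or.inl (Or.inl (by exact_mod_cast h))
      · exact Or.inl (Or.inr (by rw [h]; push_cast; ring))
      · exact Or.inr (by rw [h]; push_cast; ring)
  have hspecB : ∀ x : ℝ, (∃ i, hB.eigenvalues i = x) ↔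
      (x = (3 - t) / 4 ∨ x = (1 + t) / 4) := by
    intro x
    rw [stmt18_eig_iff_det hB x, hdetB]
    rw [mul_eq_zero, sub_eq_zero, sub_eq_zero]
    constructor
    · rintro (h | h)
      · exact Or.inl (by exact_mod_cast h)
      · exact Or.inr (by exact_mod_cast h)
    · rintro (h | h)
      · exact Or.inl (by exact_mod_cast h)
      · exact Or.inr (by exact_mod_cast h)
  -- the two largest eigenvalues
  have hmaxRB : Finset.univ.sup' Finset.univ_nonempty hRB.eigenvalues = (3 + t) / 4 := by
    apply le_antisymm
    · apply Finset.sup'_le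
      intro i _
      rcases (hspecRB (hRB.eigenvalues i)).mp ⟨i, rfl⟩ with h | h | h <;> rw [h] <;> linarith
    · obtain ⟨i, hi⟩ := (hspecRB ((3 + t) / 4)).mpr (Or.inr (Or.inr rfl))
      rw [← hi]
      exact Finset.le_sup' _ (Finset.mem_univ i)
  have hmaxB : Finset.univ.sup' Finset.univ_nonempty hB.eigenvalues = (3 - t) / 4 := by
    apply le_antisymm
    · apply Finset.sup'_le
      intro i _
      rcases (hspecB (hB.eigenvalues i)).mp ⟨i, rfl⟩ with h | h <;> rw [h] <;> linarith
    · obtain ⟨i, hi⟩ := (hspecB ((3 - t) / 4)).mpr (Or.inl rfl)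
      rw [← hi]
      exact Finset.le_sup' _ (Finset.mem_univ i)
  rw [hmaxRB, hmaxB]
  have hpi : (0 : ℝ) < Real.pi := Real.pi_pos
  constructor
  · intro h
    have ht0 : t ≤ 0 := by linarith
    refine ⟨?_, hγ.2⟩
    by_contra hlt
    push_neg at hlt
    have h1 : Real.pi * γ ∈ Set.Ioo (-(Real.pi / 2)) (Real.pi / 2) := by
      constructor
      · nlinarith [hγ.1]
      · nlinarith
    have := Real.cos_pos_of_mem_Ioo h1
    rw [← htdef] at this
    linarith
  · rintro ⟨h1, h2⟩
    have ht0 : t ≤ 0 := by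
      rw [htdef]
      apply Real.cos_nonpos_of_pi_div_two_le_of_le
      · nlinarith
      · nlinarith
    linarith
end
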